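/- Let d ≥ 1 and let G_1,…,G_d be finite simple connected graphs with totally ordered vertex sets, and let 𝒢 = G_1×…×G_d. For every non-negative integer k, the graded piece Chow^{k+1}(𝒢) of the combinatorial Chow ring is generated as a ℤ-module by the classes of the monomials C_σ = C_{v_0}C_{v_1}⋯C_{v_k}, where σ ranges over the non-degenerate k-simplices of 𝒢 with vertices v_0 < v_1 < … < v_k. -/

import Mathlib

open MvPolynomial

namespace ChowGS

variable {d : ℕ}

section General

variable (V : Fin d → Type) [∀ i, Fintype (V i)] [∀ i, LinearOrder (V i)]
variable (G : ∀ i, SimpleGraph (V i))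

/-- The vertex set of the product `𝒢 = G_1 × … × G_d`. -/
abbrev GV : Type := ∀ i, V i

/-- `u ≤ v` is a 1-simplex of the product. -/
def OneSimplex (u v : GV V) : Prop :=
  u ≤ v ∧ ∀ i, u i = v i ∨ (G i).Adj (u i) (v i)

/-- `I(u,v)`: the set of coordinates where `u` is strictly smaller than `v`. -/
def Iset (u v : GV V) : Finset (Fin d) :=
  Finset.univ.filter fun i => u i < v i

/-- A (possibly degenerate) `k`-simplex of the product. -/
def IsSimplexChain {k : ℕ} (σ : Fin (k + 1) → GV V) : Prop :=
  Monotone σ ∧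
  (∀ j : Fin k, OneSimplex V G (σ j.castSucc) (σ j.succ)) ∧
  ∀ j j' : Fin k, j ≠ j' →
    Disjoint (Iset V (σ j.castSucc) (σ j.succ)) (Iset V (σ j'.castSucc) (σ j'.succ))

/-- A list of vertices forms a simplex of `𝒢`. -/
def FormsSimplex (l : List (GV V)) : Prop :=
  ∃ (k : ℕ) (σ : Fin (k + 1) → GV V), IsSimplexChain V G σ ∧ l.Subperm (List.ofFn σ)

/-- The ideal of elements rationally equivalent to zero, generated by (R1), (R2), (R3). -/
noncomputable def Irat : Ideal (MvPolynomial (GV V) ℤ) :=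
  Ideal.span
    ({ p | ∃ l : List (GV V), ¬ FormsSimplex V G l ∧ p = (l.map X).prod } ∪
     { p | ∃ u : GV V, p = X u * ∑ v : GV V, X v } ∪
     { p | ∃ u w : GV V, ∃ i : Fin d, u i ≠ w i ∧
         p = X u * X w * ∑ v ∈ Finset.univ.filter (fun v : GV V => v i = u i), X v })

/-- The combinatorial Chow ring of the product of graphs. -/
abbrev Chow : Type := MvPolynomial (GV V) ℤ ⧸ Irat V G

noncomputable def mkChow : MvPolynomial (GV V) ℤ →ₐ[ℤ] Chow V G :=
  Ideal.Quotient.mkₐ ℤ (Irat V G)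

/-- The degree `n` graded piece of the Chow ring. -/
noncomputable def chowPiece (n : ℕ) : Submodule ℤ (Chow V G) :=
  Submodule.map (mkChow V G).toLinearMap (homogeneousSubmodule (GV V) ℤ n)

end General
end ChowGS

namespace ChowGS

section Nondeg

variable {d : ℕ}
variable (V : Fin d → Type) [∀ i, Fintype (V i)] [∀ i, LinearOrder (V i)]
variable (G : ∀ i, SimpleGraph (V i))

/-- A non-degenerate `k`-simplex of the product. -/
def IsNondegSimplex {k : ℕ} (σ : Fin (k + 1) → GV V) : Prop :=
  IsSimplexChain V G σ ∧ StrictMono σ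

/-- The monomial `C_σ = ∏_j C_{σ(j)}` attached to a simplex. -/
noncomputable def Cmon {k : ℕ} (σ : Fin (k + 1) → GV V) : MvPolynomial (GV V) ℤ :=
  ∏ j, MvPolynomial.X (σ j)

/-- The combinatorial cube `e_{u,v} = ∏_i {u_i, v_i}` spanned by a 1-simplex `u ≤ v`. -/
def cubeOf (u v : GV V) : Finset (GV V) :=
  Finset.univ.filter fun w => ∀ i, w i = u i ∨ w i = v i

/-- The element `R̃_{σ,i,j}` attached to a simplex `σ`, a position `t` and
indices `i, j ∈ I(σ_t, σ_{t+1})`. -/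
noncomputable def Rtilde {k : ℕ} (σ : Fin (k + 1) → GV V) (t : Fin k) (i j : Fin d) :
    MvPolynomial (GV V) ℤ :=
  (∑ w ∈ (cubeOf V (σ t.castSucc) (σ t.succ)).filter
      (fun w => w i = σ t.castSucc i), MvPolynomial.X w)
  - ∑ w ∈ (cubeOf V (σ t.castSucc) (σ t.succ)).filter
      (fun w => w j = σ t.castSucc j), MvPolynomial.X w

/-- `ℤ⟨𝒢_k^{nd}⟩`: the subgroup of `Z(𝒢)` generated by the monomials of
non-degenerate `k`-simplices. -/
noncomputable def Znd (k : ℕ) : Submodule ℤ (MvPolynomial (GV V) ℤ) :=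
  Submodule.span ℤ
    {p | ∃ σ : Fin (k + 1) → GV V, IsNondegSimplex V G σ ∧ p = Cmon V σ}

/-- `I_k^{nd}`: the subgroup of `ℤ⟨𝒢_k^{nd}⟩` generated by the elements
`C_σ · R̃_{σ,i,j}`. -/
noncomputable def Ind (k : ℕ) : Submodule ℤ (MvPolynomial (GV V) ℤ) :=
  Submodule.span ℤ
    {p | ∃ σ : Fin (k + 1) → GV V, IsNondegSimplex V G σ ∧
      ∃ (t : Fin k) (i j : Fin d),
        i ∈ Iset V (σ t.castSucc) (σ t.succ) ∧ j ∈ Iset V (σ t.castSucc) (σ t.succ) ∧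
        p = Cmon V σ * Rtilde V σ t i j}

end Nondeg
end ChowGS
namespace ChowGS

section ProofAux

variable {d : ℕ}
variable (V : Fin d → Type) [∀ i, Fintype (V i)] [∀ i, LinearOrder (V i)]
variable (G : ∀ i, SimpleGraph (V i))
set_option linter.unusedSectionVars false

/-- A rank function on the vertices of the product, strictly monotone for the
product partial order. -/
def height (x : GV V) : ℕ := ∑ i, (Finset.univ.filter (· < x i)).card

lemma height_lt {x y : GV V} (hxy : x < y) : height V x < height V y := by
  obtain ⟨hle, i, hi⟩ := Pi.lt_def.mp hxy
  refine Finset.sum_lt_sum (fun j _ => ?_) ⟨i, Finset.mem_univ i, ?_⟩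
  · refine Finset.card_le_card fun a ha => ?_
    simp only [Finset.mem_filter, Finset.mem_univ, true_and] at *
    exact lt_of_lt_of_le ha (hle j)
  · refine Finset.card_lt_card ⟨fun a ha => ?_, fun hcon => ?_⟩
    · simp only [Finset.mem_filter, Finset.mem_univ, true_and] at *
      exact lt_trans ha hi
    · have h1 : x i ∈ Finset.univ.filter (· < y i) := by
        simp only [Finset.mem_filter, Finset.mem_univ, true_and]; exact hi
      have h2 := hcon h1
      simp only [Finset.mem_filter, Finset.mem_univ, true_and] at h2
      exact lt_irrefl _ h2

lemma height_le_bound (x : GV V) : height V x ≤ ∑ i, Fintype.card (V i) := by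
  refine Finset.sum_le_sum fun i _ => ?_
  simpa using Finset.card_filter_le (Finset.univ : Finset (V i)) (· < x i)

lemma comparable_of_forms {l : List (GV V)} (hl : FormsSimplex V G l) :
    ∀ x ∈ l, ∀ y ∈ l, x ≤ y ∨ y ≤ x := by
  obtain ⟨k', σ, hσ, hsub⟩ := hl
  intro x hx y hy
  obtain ⟨s, rfl⟩ := (List.mem_ofFn).mp (hsub.subset hx)
  obtain ⟨t, rfl⟩ := (List.mem_ofFn).mp (hsub.subset hy)
  rcases le_total s t with h | h
  · exact Or.inl (hσ.1 h)
  · exact Or.inr (hσ.1 h)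

lemma mem_Iset {u v : GV V} {i : Fin d} : i ∈ Iset V u v ↔ u i < v i := by
  simp [Iset]

lemma chain_step {k' : ℕ} {σ : Fin (k' + 1) → GV V} (hσ : IsSimplexChain V G σ) (i : Fin d) :
    ∀ t s : Fin (k' + 1), s ≤ t → σ s i < σ t i →
      ∃ r : Fin k', σ s i = σ r.castSucc i ∧ σ t i = σ r.succ i := by
  intro t
  induction t using Fin.induction with
  | zero =>
    intro s hs hlt
    have : s = 0 := le_antisymm hs (Fin.zero_le s)
    rw [this] at hlt
    exact absurd hlt (lt_irrefl _)
  | succ j ih =>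
    intro s hs hlt
    have hmono := hσ.1
    have hstep : σ j.castSucc i ≤ σ j.succ i := hmono (Fin.castSucc_le_succ j) i
    have hsne : s ≠ j.succ := by
      rintro rfl; exact absurd hlt (lt_irrefl _)
    have hs' : s ≤ j.castSucc := Fin.le_castSucc_iff.mpr (lt_of_le_of_ne hs hsne)
    rcases eq_or_lt_of_le hstep with heq | hlt2
    · have hlt' : σ s i < σ j.castSucc i := by rw [heq]; exact hlt
      obtain ⟨r, hr1, hr2⟩ := ih s hs' hlt'
      exact ⟨r, hr1, by rw [← heq, hr2]⟩
    · rcases eq_or_lt_of_le (hmono hs' i : σ s i ≤ σ j.castSucc i) with heq2 | hlt3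
      · exact ⟨j, heq2, rfl⟩
      · obtain ⟨r, hr1, hr2⟩ := ih s hs' hlt3
        exfalso
        have hrj : r ≠ j := by
          rintro rfl
          rw [← hr2] at hlt2
          exact absurd hlt2 (lt_irrefl _)
        have hi1 : i ∈ Iset V (σ r.castSucc) (σ r.succ) := by
          rw [mem_Iset, ← hr1, ← hr2]; exact hlt3
        have hi2 : i ∈ Iset V (σ j.castSucc) (σ j.succ) := by
          rw [mem_Iset]; exact hlt2
        exact Finset.disjoint_left.mp (hσ.2.2 r j hrj) hi1 hi2

lemma forms_adjOrEq {l : List (GV V)} (hl : FormsSimplex V G l) :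
    ∀ x ∈ l, ∀ y ∈ l, ∀ i, x i = y i ∨ (G i).Adj (x i) (y i) := by
  obtain ⟨k', σ, hσ, hsub⟩ := hl
  have main : ∀ s t : Fin (k' + 1), ∀ i, σ s i < σ t i → (G i).Adj (σ s i) (σ t i) := by
    intro s t i hlt
    have hst : s ≤ t := by
      rcases le_total s t with h | h
      · exact h
      · exact absurd (hσ.1 h i) (not_le_of_gt hlt)
    obtain ⟨r, hr1, hr2⟩ := chain_step V G hσ i t s hst hlt
    have := (hσ.2.1 r).2 i
    rcases this with heq | hadj
    · exfalso; rw [hr1, hr2, heq] at hlt; exact lt_irrefl _ hlt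
    · rw [hr1, hr2]; exact hadj
  intro x hx y hy i
  obtain ⟨s, rfl⟩ := (List.mem_ofFn).mp (hsub.subset hx)
  obtain ⟨t, rfl⟩ := (List.mem_ofFn).mp (hsub.subset hy)
  rcases lt_trichotomy (σ s i) (σ t i) with h | h | h
  · exact Or.inr (main s t i h)
  · exact Or.inl h
  · exact Or.inr (main t s i h).symm

lemma forms_noThree {l : List (GV V)} (hl : FormsSimplex V G l) :
    ∀ (i : Fin d), ∀ x ∈ l, ∀ y ∈ l, ∀ z ∈ l, x i < y i → y i < z i → False := by
  obtain ⟨k', σ, hσ, hsub⟩ := hl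
  intro i x hx y hy z hz hxy hyz
  obtain ⟨s, rfl⟩ := (List.mem_ofFn).mp (hsub.subset hx)
  obtain ⟨t, rfl⟩ := (List.mem_ofFn).mp (hsub.subset hy)
  obtain ⟨p, rfl⟩ := (List.mem_ofFn).mp (hsub.subset hz)
  have hst : s ≤ t := by
    rcases le_total s t with h | h
    · exact h
    · exact absurd (hσ.1 h i) (not_le_of_gt hxy)
  have htp : t ≤ p := by
    rcases le_total t p with h | h
    · exact h
    · exact absurd (hσ.1 h i) (not_le_of_gt hyz)
  obtain ⟨r1, hr11, hr12⟩ := chain_step V G hσ i t s hst hxy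
  obtain ⟨r2, hr21, hr22⟩ := chain_step V G hσ i p t htp hyz
  have hne : r1 ≠ r2 := by
    rintro rfl
    have heq : σ s i = σ t i := hr11.trans hr21.symm
    rw [heq] at hxy
    exact lt_irrefl _ hxy
  have hi1 : i ∈ Iset V (σ r1.castSucc) (σ r1.succ) := by
    rw [mem_Iset, ← hr11, ← hr12]; exact hxy
  have hi2 : i ∈ Iset V (σ r2.castSucc) (σ r2.succ) := by
    rw [mem_Iset, ← hr21, ← hr22]; exact hyz
  exact Finset.disjoint_left.mp (hσ.2.2 r1 r2 hne) hi1 hi2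

end ProofAux
end ChowGS
namespace ChowGS
section ProofAux2
variable {d : ℕ}
variable (V : Fin d → Type) [∀ i, Fintype (V i)] [∀ i, LinearOrder (V i)]
variable (G : ∀ i, SimpleGraph (V i))
set_option linter.unusedSectionVars false

lemma le_of_comparable_height {x y : GV V} (hc : x ≤ y ∨ y ≤ x)
    (hh : height V x ≤ height V y) : x ≤ y := by
  rcases hc with h | h
  · exact h
  · rcases eq_or_lt_of_le h with he | hl
    · exact le_of_eq he.symm
    · exact absurd (height_lt V hl) (not_lt_of_ge hh)

lemma exists_nondeg {k : ℕ} {m : Multiset (GV V)} (hcard : Multiset.card m = k + 1)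
    (hform : FormsSimplex V G m.toList) (hnd : m.Nodup) :
    ∃ σ : Fin (k + 1) → GV V, IsNondegSimplex V G σ ∧ (m.map X).prod = Cmon V σ := by
  classical
  set l := m.toList with hl
  have hmem : ∀ x, x ∈ l ↔ x ∈ m := fun x => Multiset.mem_toList
  have hndl : l.Nodup := by
    have := Multiset.coe_toList m
    rw [← this] at hnd
    exact hnd
  set L := l.mergeSort (fun a b => decide (height V a ≤ height V b)) with hLdef
  have hperm : L.Perm l := List.mergeSort_perm l _
  have hsorted : L.Pairwise (fun a b => (decide (height V a ≤ height V b)) = true) := by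
    refine List.pairwise_mergeSort ?_ ?_ l
    · intro a b c hab hbc
      simp only [decide_eq_true_eq] at *
      exact le_trans hab hbc
    · intro a b
      simp only [Bool.or_eq_true, decide_eq_true_eq]
      exact le_total _ _
  have hLmem : ∀ x ∈ L, x ∈ m := fun x hx => (hmem x).mp (hperm.subset hx)
  have hndL : L.Nodup := hperm.nodup_iff.mpr hndl
  have hlen : L.length = k + 1 := by
    rw [hperm.length_eq, hl, Multiset.length_toList, hcard]
  set σ : Fin (k + 1) → GV V := fun j => L.get (Fin.cast hlen.symm j) with hσdef
  have hσmem : ∀ j, σ j ∈ l := fun j => hperm.subset (L.get_mem _)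
  have hhle : ∀ a b : Fin (k + 1), a < b → height V (σ a) ≤ height V (σ b) := by
    intro a b hab
    have := List.pairwise_iff_get.mp hsorted (Fin.cast hlen.symm a) (Fin.cast hlen.symm b)
      (by simpa using hab)
    simpa [hσdef] using this
  have hcomp := comparable_of_forms V G hform
  have hmono : Monotone σ := by
    intro a b hab
    rcases eq_or_lt_of_le hab with rfl | hlt
    · exact le_refl _
    · exact le_of_comparable_height V (hcomp _ (hσmem a) _ (hσmem b)) (hhle a b hlt)
  have hinj : Function.Injective σ := by
    intro a b hab
    have := (hndL.get_inj_iff).mp hab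
    have h2 : (Fin.cast hlen.symm a).val = (Fin.cast hlen.symm b).val := by rw [this]
    exact Fin.ext h2
  have hsm : StrictMono σ := hmono.strictMono_of_injective hinj
  have hadj := forms_adjOrEq V G hform
  have hthree := forms_noThree V G hform
  have hdisj : ∀ j j' : Fin k, j < j' →
      Disjoint (Iset V (σ j.castSucc) (σ j.succ)) (Iset V (σ j'.castSucc) (σ j'.succ)) := by
    intro j j' hjj'
    rw [Finset.disjoint_left]
    intro i hi hi'
    rw [mem_Iset] at hi hi'
    have hmid : σ j.succ ≤ σ j'.castSucc := hmono (Fin.succ_le_castSucc_iff.mpr hjj')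
    have h1 : σ j.castSucc i < σ j'.castSucc i := lt_of_lt_of_le hi (hmid i)
    exact hthree i _ (hσmem j.castSucc) _ (hσmem j'.castSucc) _ (hσmem j'.succ) h1 hi'
  refine ⟨σ, ⟨⟨hmono, ?_, ?_⟩, hsm⟩, ?_⟩
  · intro j
    exact ⟨hmono (Fin.castSucc_le_succ j),
      fun i => hadj _ (hσmem j.castSucc) _ (hσmem j.succ) i⟩
  · intro j j' hne
    rcases hne.lt_or_gt with h | h
    · exact hdisj j j' h
    · exact (hdisj j' j h).symm
  · -- product identity
    have h1 : (m.map (X : GV V → MvPolynomial (GV V) ℤ)).prod = (l.map (X : GV V → MvPolynomial (GV V) ℤ)).prod := by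
      conv_lhs => rw [← Multiset.coe_toList m]
      rw [hl, Multiset.map_coe, Multiset.prod_coe]
    have h2 : (l.map (X : GV V → MvPolynomial (GV V) ℤ)).prod = (L.map (X : GV V → MvPolynomial (GV V) ℤ)).prod := (hperm.map (X : GV V → MvPolynomial (GV V) ℤ)).prod_eq.symm
    rw [h1, h2, Cmon]
    have h3 : ∏ j : Fin (k + 1), (X (σ j) : MvPolynomial (GV V) ℤ) =
        ∏ j : Fin L.length, (X (L.get j) : MvPolynomial (GV V) ℤ) := by
      simp only [hσdef]
      exact Fin.prod_congr' (fun r => (X (L.get r) : MvPolynomial (GV V) ℤ)) hlen.symm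
    rw [h3]
    conv_lhs => rw [← List.ofFn_get L]
    rw [List.map_ofFn, List.prod_ofFn]
    rfl

end ProofAux2
end ChowGS
namespace ChowGS
section ProofAux3
variable {d : ℕ}
variable (V : Fin d → Type) [∀ i, Fintype (V i)] [∀ i, LinearOrder (V i)]
variable (G : ∀ i, SimpleGraph (V i))
set_option linter.unusedSectionVars false

lemma mk_zero_of_mem {p : MvPolynomial (GV V) ℤ} (hp : p ∈ Irat V G) :
    mkChow V G p = 0 := by
  show Ideal.Quotient.mkₐ ℤ (Irat V G) p = 0
  rw [Ideal.Quotient.mkₐ_eq_mk]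
  exact Ideal.Quotient.eq_zero_iff_mem.mpr hp

lemma nonsimplex_mem {l : List (GV V)} (h : ¬ FormsSimplex V G l) :
    ((l.map X).prod : MvPolynomial (GV V) ℤ) ∈ Irat V G :=
  Ideal.subset_span (Or.inl (Or.inl ⟨l, h, rfl⟩))

lemma R2_mem (u : GV V) (M : Multiset (GV V)) :
    (∑ v : GV V, X u * X v * (M.map X).prod : MvPolynomial (GV V) ℤ) ∈ Irat V G := by
  have heq : (∑ v : GV V, X u * X v * (M.map X).prod : MvPolynomial (GV V) ℤ)
      = (X u * ∑ v : GV V, X v) * (M.map X).prod := by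
    rw [Finset.mul_sum, Finset.sum_mul]
  rw [heq]
  exact Ideal.mul_mem_right _ _ (Ideal.subset_span (Or.inl (Or.inr ⟨u, rfl⟩)))

lemma R3_mem (u w : GV V) (i : Fin d) {M : Multiset (GV V)} (hw : w ∈ M)
    (hne : u i ≠ w i) :
    (∑ v ∈ Finset.univ.filter (fun v : GV V => v i = u i),
      X u * X v * (M.map X).prod : MvPolynomial (GV V) ℤ) ∈ Irat V G := by
  classical
  have hQ : (X w : MvPolynomial (GV V) ℤ) * ((M.erase w).map X).prod = (M.map X).prod :=
    Multiset.prod_map_erase hw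
  have heq : (∑ v ∈ Finset.univ.filter (fun v : GV V => v i = u i),
      X u * X v * (M.map X).prod : MvPolynomial (GV V) ℤ)
      = (X u * X w * ∑ v ∈ Finset.univ.filter (fun v : GV V => v i = u i), X v)
        * ((M.erase w).map X).prod := by
    rw [Finset.mul_sum, Finset.sum_mul]
    refine Finset.sum_congr rfl fun v _ => ?_
    rw [← hQ]; ring
  rw [heq]
  exact Ideal.mul_mem_right _ _ (Ideal.subset_span (Or.inr ⟨u, w, i, hne, rfl⟩))

lemma reduce_general (u : GV V) (M : Multiset (GV V)) (F : Finset (GV V)) (hu : u ∈ F)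
    (hmem : (∑ v ∈ F, X u * X v * (M.map X).prod : MvPolynomial (GV V) ℤ) ∈ Irat V G) :
    mkChow V G (((u ::ₘ u ::ₘ M).map X).prod)
      = - ∑ v ∈ F.erase u, mkChow V G (((u ::ₘ v ::ₘ M).map X).prod) := by
  classical
  have hprod : ∀ v : GV V, (((u ::ₘ v ::ₘ M).map X).prod : MvPolynomial (GV V) ℤ)
      = X u * X v * (M.map X).prod := by
    intro v
    rw [Multiset.map_cons, Multiset.map_cons, Multiset.prod_cons, Multiset.prod_cons,
      mul_assoc]
  have h0 : (∑ v ∈ F, mkChow V G (X u * X v * (M.map X).prod)) = 0 := by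
    rw [← map_sum]
    exact mk_zero_of_mem V G hmem
  rw [← Finset.add_sum_erase F (fun v => mkChow V G (X u * X v * (M.map X).prod)) hu] at h0
  have := eq_neg_of_add_eq_zero_left h0
  rw [hprod u, this]
  congr 1
  refine Finset.sum_congr rfl fun v _ => ?_
  rw [hprod v]

lemma choose_coord {u : GV V} {M : Multiset (GV V)}
    (hcomp : ∀ x ∈ (u ::ₘ u ::ₘ M), ∀ y ∈ (u ::ₘ u ::ₘ M), x ≤ y ∨ y ≤ x)
    {c : GV V} (hc : c ∈ M) (hcu : c ≠ u) :
    ∃ (i : Fin d) (w : GV V), w ∈ M ∧ u i ≠ w i ∧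
      ∀ v ∈ (u ::ₘ u ::ₘ M), v i = u i → v ≠ u → height V v < height V u := by
  classical
  set m := u ::ₘ u ::ₘ M with hm
  have humem : u ∈ m := by simp [hm]
  have hMm : ∀ x ∈ M, x ∈ m := by intro x hx; simp [hm, hx]
  by_cases hT : (m.toFinset.filter (fun x => u < x)).Nonempty
  · obtain ⟨c0, hc0T, hmin⟩ := Finset.exists_min_image _ (height V) hT
    rw [Finset.mem_filter, Multiset.mem_toFinset] at hc0T
    obtain ⟨hc0m, hc0lt⟩ := hc0T
    obtain ⟨-, i, hi⟩ := Pi.lt_def.mp hc0lt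
    have hc0ne : c0 ≠ u := (hc0lt.ne).symm
    have hc0M : c0 ∈ M := by
      rcases Multiset.mem_cons.mp hc0m with h | h
      · exact absurd h hc0ne
      rcases Multiset.mem_cons.mp h with h' | h'
      · exact absurd h' hc0ne
      · exact h'
    refine ⟨i, c0, hc0M, hi.ne, ?_⟩
    intro v hv hvi hvu
    rcases hcomp v hv u humem with h | h
    · exact height_lt V (lt_of_le_of_ne h hvu)
    · exfalso
      have hvT : v ∈ m.toFinset.filter (fun x => u < x) := by
        rw [Finset.mem_filter, Multiset.mem_toFinset]
        exact ⟨hv, lt_of_le_of_ne h (Ne.symm hvu)⟩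
      have hhv := hmin v hvT
      rcases hcomp v hv c0 (hMm c0 hc0M) with h2 | h2
      · have hvc0 : v ≠ c0 := by
          intro he; rw [he] at hvi; rw [hvi] at hi; exact lt_irrefl _ hi
        exact absurd hhv (not_le_of_gt (height_lt V (lt_of_le_of_ne h2 hvc0)))
      · have : c0 i ≤ v i := h2 i
        rw [hvi] at this
        exact absurd this (not_le_of_gt hi)
  · have hall : ∀ v ∈ m, v ≤ u := by
      intro v hv
      rcases hcomp v hv u humem with h | h
      · exact h
      · rcases eq_or_lt_of_le h with he | hlt
        · exact le_of_eq he.symm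
        · exact absurd ⟨v, by rw [Finset.mem_filter, Multiset.mem_toFinset]; exact ⟨hv, hlt⟩⟩ hT
    have hclt : c < u := lt_of_le_of_ne (hall c (hMm c hc)) hcu
    obtain ⟨c0, hc0T, hmax⟩ := Finset.exists_max_image
      (m.toFinset.filter (fun x => x < u)) (height V)
      ⟨c, by rw [Finset.mem_filter, Multiset.mem_toFinset]; exact ⟨hMm c hc, hclt⟩⟩
    rw [Finset.mem_filter, Multiset.mem_toFinset] at hc0T
    obtain ⟨hc0m, hc0lt⟩ := hc0T
    obtain ⟨-, i, hi⟩ := Pi.lt_def.mp hc0lt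
    have hc0ne : c0 ≠ u := hc0lt.ne
    have hc0M : c0 ∈ M := by
      rcases Multiset.mem_cons.mp hc0m with h | h
      · exact absurd h hc0ne
      rcases Multiset.mem_cons.mp h with h' | h'
      · exact absurd h' hc0ne
      · exact h'
    refine ⟨i, c0, hc0M, (hi.ne).symm, ?_⟩
    intro v hv hvi hvu
    exfalso
    have hvlt : v < u := lt_of_le_of_ne (hall v hv) hvu
    have hhv := hmax v (by rw [Finset.mem_filter, Multiset.mem_toFinset]; exact ⟨hv, hvlt⟩)
    rcases hcomp v hv c0 (hMm c0 hc0M) with h2 | h2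
    · have : v i ≤ c0 i := h2 i
      rw [hvi] at this
      exact absurd hi (not_lt_of_ge this)
    · have hvc0 : c0 ≠ v := by
        intro he; rw [← he] at hvi; rw [← hvi] at hi; exact lt_irrefl _ hi
      exact absurd hhv (not_le_of_gt (height_lt V (lt_of_le_of_ne h2 hvc0)))

end ProofAux3
end ChowGS
namespace ChowGS
section ProofAux4
variable {d : ℕ}
variable (V : Fin d → Type) [∀ i, Fintype (V i)] [∀ i, LinearOrder (V i)]
variable (G : ∀ i, SimpleGraph (V i))
set_option linter.unusedSectionVars false

/-- The termination measure for the moving algorithm. -/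
def mu (A : ℕ) (m : Multiset (GV V)) : ℕ :=
  A * (Multiset.card m - m.toFinset.card) + (m.map (height V)).sum

lemma psi_bound (m : Multiset (GV V)) :
    (m.map (height V)).sum ≤ Multiset.card m * (∑ i, Fintype.card (V i)) := by
  have := Multiset.sum_le_card_nsmul (m.map (height V)) (∑ i, Fintype.card (V i))
    (fun x hx => by
      obtain ⟨y, _, rfl⟩ := Multiset.mem_map.mp hx
      exact height_le_bound V y)
  simpa [Multiset.card_map, smul_eq_mul] using this

lemma mu_lt {A : ℕ} {u v : GV V} {M : Multiset (GV V)} (hvu : v ≠ u)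
    (hA : (((u ::ₘ v ::ₘ M).map (height V)).sum) < A)
    (hcase : v ∈ M.toFinset → height V v < height V u) :
    mu V A (u ::ₘ v ::ₘ M) < mu V A (u ::ₘ u ::ₘ M) := by
  classical
  by_cases hvM : v ∈ M.toFinset
  · have hfin : (u ::ₘ v ::ₘ M).toFinset = (u ::ₘ u ::ₘ M).toFinset := by
      rw [Multiset.toFinset_cons, Multiset.toFinset_cons, Multiset.toFinset_cons,
        Multiset.toFinset_cons, Finset.insert_eq_self.mpr hvM,
        Finset.insert_eq_self.mpr (Finset.mem_insert_self u M.toFinset)]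
    have hcards : Multiset.card (u ::ₘ v ::ₘ M) = Multiset.card (u ::ₘ u ::ₘ M) := by
      simp
    unfold mu
    rw [hfin, hcards]
    have hsum : ((u ::ₘ v ::ₘ M).map (height V)).sum < ((u ::ₘ u ::ₘ M).map (height V)).sum := by
      simp only [Multiset.map_cons, Multiset.sum_cons]
      have := hcase hvM
      omega
    omega
  · have hvm : v ∉ (u ::ₘ u ::ₘ M).toFinset := by
      rw [Multiset.toFinset_cons, Multiset.toFinset_cons]
      simp only [Finset.mem_insert, Multiset.mem_toFinset]
      rw [Multiset.mem_toFinset] at hvM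
      push_neg
      exact ⟨hvu, hvu, hvM⟩
    have hfin : (u ::ₘ v ::ₘ M).toFinset = insert v ((u ::ₘ u ::ₘ M).toFinset) := by
      rw [Multiset.toFinset_cons, Multiset.toFinset_cons, Multiset.toFinset_cons,
        Multiset.toFinset_cons]
      rw [Finset.insert_eq_self.mpr (Finset.mem_insert_self u M.toFinset)]
      rw [Finset.insert_comm]
    have hcard1 : (u ::ₘ v ::ₘ M).toFinset.card = (u ::ₘ u ::ₘ M).toFinset.card + 1 := by
      rw [hfin, Finset.card_insert_of_notMem hvm]
    have hle : (u ::ₘ v ::ₘ M).toFinset.card ≤ Multiset.card (u ::ₘ v ::ₘ M) :=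
      Multiset.toFinset_card_le _
    have hcards : Multiset.card (u ::ₘ v ::ₘ M) = Multiset.card (u ::ₘ u ::ₘ M) := by simp
    unfold mu
    set n := Multiset.card (u ::ₘ u ::ₘ M)
    set c := (u ::ₘ u ::ₘ M).toFinset.card
    rw [hcards, hcard1]
    have h1 : c + 1 ≤ n := by rw [← hcards, ← hcard1]; exact hle
    have h2 : n - c = (n - (c + 1)) + 1 := by omega
    calc A * (n - (c + 1)) + ((u ::ₘ v ::ₘ M).map (height V)).sum
        < A * (n - (c + 1)) + A := by omega
      _ = A * (n - c) := by rw [h2, Nat.mul_succ]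
      _ ≤ A * (n - c) + ((u ::ₘ u ::ₘ M).map (height V)).sum := Nat.le_add_right _ _

/-- The span of the monomial classes of non-degenerate `k`-simplices. -/
noncomputable def NDspan (k : ℕ) : Submodule ℤ (Chow V G) :=
  Submodule.span ℤ
    {x : Chow V G | ∃ σ : Fin (k + 1) → GV V,
      IsNondegSimplex V G σ ∧ x = mkChow V G (Cmon V σ)}

lemma key_lemma (k : ℕ) (n : ℕ) :
    ∀ m : Multiset (GV V), Multiset.card m = k + 1 →
      mu V ((k + 1) * (∑ i, Fintype.card (V i)) + 1) m ≤ n →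
      mkChow V G ((m.map X).prod) ∈ NDspan V G k := by
  classical
  set A := (k + 1) * (∑ i, Fintype.card (V i)) + 1 with hA
  induction n using Nat.strong_induction_on with
  | _ n ih =>
  intro m hcard hmu
  by_cases hform : FormsSimplex V G m.toList
  · by_cases hnd : m.Nodup
    · obtain ⟨σ, hσ, hprod⟩ := exists_nondeg V G hcard hform hnd
      rw [hprod]
      exact Submodule.subset_span ⟨σ, hσ, rfl⟩
    · -- find a duplicate
      obtain ⟨u, hcount⟩ : ∃ u : GV V, 2 ≤ m.count u := by
        by_contra hcon
        push_neg at hcon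
        exact hnd (Multiset.nodup_iff_count_le_one.mpr fun a => by
          have := hcon a; omega)
      have hum : u ∈ m := Multiset.count_pos.mp (by omega)
      have hue : u ∈ m.erase u := by
        rw [← Multiset.count_pos, Multiset.count_erase_self]
        omega
      obtain ⟨M, hmM⟩ : ∃ M, m = u ::ₘ u ::ₘ M :=
        ⟨(m.erase u).erase u, by
          rw [Multiset.cons_erase hue, Multiset.cons_erase hum]⟩
      subst hmM
      have hcardM : Multiset.card (u ::ₘ u ::ₘ M) = k + 1 := hcard
      -- bound for new multisets
      have hAbound : ∀ v : GV V,
          (((u ::ₘ v ::ₘ M).map (height V)).sum) < A := by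
        intro v
        have h1 := psi_bound V (u ::ₘ v ::ₘ M)
        have h2 : Multiset.card (u ::ₘ v ::ₘ M) = k + 1 := by
          simpa using hcardM
        rw [h2] at h1
        omega
      -- the inductive step applied to each replacement
      have hstep : ∀ v : GV V, v ≠ u → (v ∈ M.toFinset → height V v < height V u) →
          mkChow V G (((u ::ₘ v ::ₘ M).map X).prod) ∈ NDspan V G k := by
        intro v hvu hc
        have hlt : mu V A (u ::ₘ v ::ₘ M) < mu V A (u ::ₘ u ::ₘ M) :=
          mu_lt V hvu (hAbound v) hc
        have hltn : mu V A (u ::ₘ v ::ₘ M) < n := lt_of_lt_of_le hlt hmu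
        exact ih _ hltn _ (by simpa using hcardM) (le_refl _)
      by_cases hsingle : ∀ x ∈ M, x = u
      · -- R2 case
        rw [reduce_general V G u M Finset.univ (Finset.mem_univ u) (R2_mem V G u M)]
        refine Submodule.neg_mem _ (Submodule.sum_mem _ fun v hv => ?_)
        have hvu : v ≠ u := Finset.ne_of_mem_erase hv
        refine hstep v hvu fun hvM => ?_
        exact absurd (hsingle v (Multiset.mem_toFinset.mp hvM)) hvu
      · push_neg at hsingle
        obtain ⟨c, hcM, hcu⟩ := hsingle
        have hcomp : ∀ x ∈ (u ::ₘ u ::ₘ M), ∀ y ∈ (u ::ₘ u ::ₘ M), x ≤ y ∨ y ≤ x := by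
          intro x hx y hy
          exact comparable_of_forms V G hform x (Multiset.mem_toList.mpr hx)
            y (Multiset.mem_toList.mpr hy)
        obtain ⟨i, w, hwM, hwne, hdesc⟩ := choose_coord V hcomp hcM hcu
        rw [reduce_general V G u M (Finset.univ.filter (fun v : GV V => v i = u i))
          (by simp) (R3_mem V G u w i hwM hwne)]
        refine Submodule.neg_mem _ (Submodule.sum_mem _ fun v hv => ?_)
        have hvu : v ≠ u := Finset.ne_of_mem_erase hv
        have hvi : v i = u i := by
          have := Finset.mem_of_mem_erase hv
          simpa using this
        refine hstep v hvu fun hvM => ?_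
        exact hdesc v (by simp [Multiset.mem_toFinset.mp hvM]) hvi hvu
  · have hzero : mkChow V G ((m.map X).prod) = 0 := by
      have heq : ((m.map X).prod : MvPolynomial (GV V) ℤ) = ((m.toList.map X).prod) := by
        conv_lhs => rw [← Multiset.coe_toList m]
        rw [Multiset.map_coe, Multiset.prod_coe]
      rw [heq]
      exact mk_zero_of_mem V G (nonsimplex_mem V G hform)
    rw [hzero]
    exact Submodule.zero_mem _

end ProofAux4
end ChowGS
namespace ChowGS
section ProofAux5
variable {d : ℕ}
variable (V : Fin d → Type) [∀ i, Fintype (V i)] [∀ i, LinearOrder (V i)]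
variable (G : ∀ i, SimpleGraph (V i))
set_option linter.unusedSectionVars false

lemma prod_toMultiset (s : GV V →₀ ℕ) :
    ((s.toMultiset.map X).prod : MvPolynomial (GV V) ℤ) = monomial s 1 := by
  classical
  induction s using Finsupp.induction with
  | zero => simp [Finsupp.toMultiset_zero]
  | single_add a b f ha hb ih =>
    rw [Finsupp.toMultiset_add, Multiset.map_add, Multiset.prod_add, ih,
      Finsupp.toMultiset_single]
    have h1 : ((b • ({a} : Multiset (GV V))).map X).prod = (X a : MvPolynomial (GV V) ℤ) ^ b := by
      rw [Multiset.nsmul_singleton, Multiset.map_replicate, Multiset.prod_replicate]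
    rw [h1, X_pow_eq_monomial, monomial_mul, one_mul]

lemma card_toMultiset_of_homog {p : MvPolynomial (GV V) ℤ} {n : ℕ}
    (hp : p.IsHomogeneous n) {s : GV V →₀ ℕ} (hs : s ∈ p.support) :
    Multiset.card s.toMultiset = n := by
  have hcoeff : coeff s p ≠ 0 := MvPolynomial.mem_support_iff.mp hs
  have hdeg := hp hcoeff
  rw [Finsupp.card_toMultiset]
  simpa [Finsupp.weight, Finsupp.degree, Finsupp.sum, Finsupp.linearCombination] using hdeg

end ProofAux5
end ChowGS

/-- **Moving lemma** (Theorem 2.7): for every `k ≥ 0` the graded piece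
`Chow^{k+1}(𝒢)` is generated, as a `ℤ`-module, by the classes of the monomials
`C_σ = C_{v_0}⋯C_{v_k}` of non-degenerate `k`-simplices `σ : v_0 < … < v_k` of `𝒢`. -/
theorem ChowGS.moving_lemma
    {d : ℕ} (hd : 1 ≤ d)
    (V : Fin d → Type) [∀ i, Fintype (V i)] [∀ i, LinearOrder (V i)]
    (G : ∀ i, SimpleGraph (V i)) (hconn : ∀ i, (G i).Connected) (k : ℕ) :
    ChowGS.chowPiece V G (k + 1) =
      Submodule.span ℤ
        {x : ChowGS.Chow V G | ∃ σ : Fin (k + 1) → ChowGS.GV V,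
          ChowGS.IsNondegSimplex V G σ ∧ x = ChowGS.mkChow V G (ChowGS.Cmon V σ)} := by
  classical
  have hND : Submodule.span ℤ
      {x : ChowGS.Chow V G | ∃ σ : Fin (k + 1) → ChowGS.GV V,
        ChowGS.IsNondegSimplex V G σ ∧ x = ChowGS.mkChow V G (ChowGS.Cmon V σ)}
      = NDspan V G k := rfl
  rw [hND]
  apply le_antisymm
  · rintro x hx
    rw [chowPiece, Submodule.mem_map] at hx
    obtain ⟨p, hp, rfl⟩ := hx
    rw [mem_homogeneousSubmodule] at hp
    have hexp : (mkChow V G).toLinearMap p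
        = ∑ s ∈ p.support, (coeff s p) • mkChow V G ((s.toMultiset.map X).prod) := by
      show mkChow V G p = _
      conv_lhs => rw [MvPolynomial.as_sum p]
      rw [map_sum]
      refine Finset.sum_congr rfl fun s hs => ?_
      rw [prod_toMultiset]
      have hmono : (monomial s (coeff s p) : MvPolynomial (GV V) ℤ)
          = (coeff s p) • monomial s 1 := by
        rw [smul_monomial, smul_eq_mul, mul_one]
      rw [hmono, map_smul]
    rw [hexp]
    refine Submodule.sum_mem _ fun s hs => Submodule.smul_mem _ _ ?_
    exact key_lemma V G k (mu V ((k + 1) * (∑ i, Fintype.card (V i)) + 1) s.toMultiset)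
      s.toMultiset (card_toMultiset_of_homog V hp hs) (le_refl _)
  · rw [NDspan, Submodule.span_le]
    rintro x ⟨σ, hσ, rfl⟩
    rw [SetLike.mem_coe, chowPiece, Submodule.mem_map]
    refine ⟨Cmon V σ, ?_, rfl⟩
    rw [mem_homogeneousSubmodule]
    have := MvPolynomial.IsHomogeneous.prod Finset.univ
      (fun j : Fin (k + 1) => (X (σ j) : MvPolynomial (GV V) ℤ)) (fun _ => 1)
      (fun j _ => MvPolynomial.isHomogeneous_X ℤ (σ j))
    simpa [Cmon, Finset.sum_const, Finset.card_univ] using this
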